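/- Let G be a maximal subgroup of a completely simple semigroup S, σ : X⁺ → G a choice of semigroup generators for G, and τ : Y⁺ → S a choice of generators for S with X ⊆ Y and σ the restriction of τ. Then L_σ(G) = L_τ(S) ∩ (X ∪ X̄)*. -/

import Mathlib

open FreeMonoid

section LoopPrelude

variable {X M : Type*} [Monoid M]

def barW {X : Type*} (w : List (X ⊕ X)) : List (X ⊕ X) := (w.map Sum.swap).reverse

def posW {X : Type*} (u : List X) : List (X ⊕ X) := u.map Sum.inl

def negW {X : Type*} (v : List X) : List (X ⊕ X) := (v.map Sum.inr).reverse

inductive LStep (σ : FreeMonoid X →* M) : M → (X ⊕ X) → M → Prop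
  | posW (a : M) (x : X) : LStep σ a (Sum.inl x) (a * σ (of x))
  | negW (a : M) (x : X) : LStep σ (a * σ (of x)) (Sum.inr x) a

inductive LPath (σ : FreeMonoid X →* M) : M → List (X ⊕ X) → M → Prop
  | nil (a : M) : LPath σ a [] a
  | cons {a b c : M} {l : X ⊕ X} {w : List (X ⊕ X)}
      (h₁ : LStep σ a l b) (h₂ : LPath σ b w c) : LPath σ a (l :: w) c

def LoopProblem (σ : FreeMonoid X →* M) : Set (List (X ⊕ X)) := { w | LPath σ 1 w 1 }

end LoopPrelude

section SemiPrelude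

variable {X S : Type*} [Semigroup S]

def SLoopProblem (f : X → S) : Set (List (X ⊕ X)) :=
  LoopProblem (FreeMonoid.lift (fun x => (f x : WithOne S)))

end SemiPrelude

/-- A subsemigroup is a subgroup if it contains an identity for itself and inverses. -/
def IsSubgroupOf {S : Type*} [Semigroup S] (H : Subsemigroup S) : Prop :=
  ∃ e ∈ H, (∀ h ∈ H, e * h = h ∧ h * e = h) ∧ ∀ h ∈ H, ∃ h' ∈ H, h * h' = e ∧ h' * h = e

/-- A maximal subgroup: a subgroup contained in no strictly larger subgroup. -/
def IsMaximalSubgroup {S : Type*} [Semigroup S] (H : Subsemigroup S) : Prop :=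
  IsSubgroupOf H ∧ ∀ K : Subsemigroup S, IsSubgroupOf K → H ≤ K → H = K

/-- A semigroup is completely simple if it has a primitive idempotent and no
proper (two-sided) ideals. -/
def IsCompletelySimple (S : Type*) [Semigroup S] : Prop :=
  (∃ e : S, e * e = e ∧ ∀ f : S, f * f = f → e * f = f → f * e = f → f = e) ∧
  ∀ I : Set S, I.Nonempty → (∀ a ∈ I, ∀ s : S, a * s ∈ I ∧ s * a ∈ I) → I = Set.univ

section AuxLemmas

open FreeMonoid

lemma lpath_map_hom {X Y M N : Type*} [Monoid M] [Monoid N] {σ : FreeMonoid X →* M}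
    {τ : FreeMonoid Y →* N} (π : X → Y) (ι : M →* N)
    (hcomm : ∀ x : X, ι (σ (of x)) = τ (of (π x))) :
    ∀ {a b : M} {w : List (X ⊕ X)}, LPath σ a w b →
      LPath τ (ι a) (w.map (Sum.map π π)) (ι b) := by
  intro a b w h
  induction h with
  | nil a => exact LPath.nil _
  | cons h₁ h₂ ih =>
    refine LPath.cons ?_ ih
    cases h₁ with
    | posW =>
      rw [map_mul, hcomm]
      exact LStep.posW _ _
    | negW =>
      rw [map_mul, hcomm]
      exact LStep.negW _ _

end AuxLemmas


theorem cs_loop_problem_restricts_to_subgroup {Y S : Type*} [Semigroup S]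
    (hS : IsCompletelySimple S) (H : Subsemigroup S) (hH : IsMaximalSubgroup H)
    (X : Set Y) (f : Y → S)
    (hfS : ∀ s : S, ∃ w : List Y, w ≠ [] ∧
      FreeMonoid.lift (fun y => (f y : WithOne S)) (FreeMonoid.ofList w) = ↑s)
    (hrange : ∀ x : X, f x ∈ H)
    (g : X → H) (hg : ∀ x : X, (g x : S) = f x)
    (hgG : ∀ h : H, ∃ w : List X, w ≠ [] ∧
      FreeMonoid.lift (fun x => ((g x : H) : WithOne H)) (FreeMonoid.ofList w) = ↑h) :
    ∀ w : List ((X : Type _) ⊕ (X : Type _)),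
      w ∈ SLoopProblem g ↔
        w.map (Sum.map (Subtype.val : X → Y) (Subtype.val : X → Y)) ∈ SLoopProblem f := by
  obtain ⟨⟨e, heH, hid, hinv⟩, -⟩ := hH
  have hee : e * e = e := (hid e heH).1
  intro w
  simp only [SLoopProblem, LoopProblem, Set.mem_setOf_eq]
  set F : FreeMonoid Y →* WithOne S := FreeMonoid.lift (fun y => (f y : WithOne S)) with hF
  set Gm : FreeMonoid ↥X →* WithOne ↥H :=
    FreeMonoid.lift (fun x => ((g x : ↥H) : WithOne ↥H)) with hGm
  set ι : WithOne ↥H →* WithOne S := WithOne.mapMulHom (MulMemClass.subtype H) with hι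
  have hιc : ∀ h : ↥H, ι (h : WithOne ↥H) = ((h : S) : WithOne S) := fun h => by
    rw [hι, WithOne.mapMulHom_coe]; rfl
  have hFx : ∀ x : ↥X, F (of (x : Y)) = ((f x : S) : WithOne S) := fun x => by
    rw [hF, FreeMonoid.lift_eval_of]
  have hGx : ∀ x : ↥X, Gm (of x) = ((g x : ↥H) : WithOne ↥H) := fun x => by
    rw [hGm, FreeMonoid.lift_eval_of]
  have hcomm : ∀ x : ↥X, ι (Gm (of x)) = F (of (x : Y)) := by
    intro x
    rw [hGx, hFx, hιc]
    exact congrArg _ (hg x)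
  have hι_inj : Function.Injective ι := by
    intro a b hab
    induction a using WithOne.recOneCoe with
    | one =>
      induction b using WithOne.recOneCoe with
      | one => rfl
      | coe b =>
        rw [map_one, hιc] at hab
        exact absurd hab.symm WithOne.coe_ne_one
    | coe a =>
      induction b using WithOne.recOneCoe with
      | one =>
        rw [map_one, hιc] at hab
        exact absurd hab WithOne.coe_ne_one
      | coe b =>
        rw [hιc, hιc, WithOne.coe_inj] at hab
        exact congrArg _ (Subtype.ext hab)
  set φ : WithOne S → WithOne S :=
    WithOne.recOneCoe 1 (fun s => ((s * e : S) : WithOne S)) with hφ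
  have hφ1 : φ 1 = 1 := WithOne.recOneCoe_one _ _
  have hφc : ∀ s : S, φ (s : WithOne S) = ((s * e : S) : WithOne S) := fun s =>
    WithOne.recOneCoe_coe _ _ s
  have hφmul : ∀ (a : WithOne S) (h : S), h ∈ H → φ (a * (h : WithOne S)) = φ a * h := by
    intro a h hh
    induction a using WithOne.recOneCoe with
    | one => rw [one_mul, hφc, (hid h hh).2, hφ1, one_mul]
    | coe s =>
      rw [← WithOne.coe_mul, hφc, hφc, ← WithOne.coe_mul,
        mul_assoc s h e, (hid h hh).2, mul_assoc s e h, (hid h hh).1]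
  have key : ∀ (w : List ((X : Type _) ⊕ (X : Type _))) (a' b' : WithOne S),
      LPath F a' (w.map (Sum.map (Subtype.val : X → Y) (Subtype.val : X → Y))) b' →
      ∀ aa : WithOne ↥H, ι aa = φ a' → ∃ bb : WithOne ↥H, ι bb = φ b' ∧ LPath Gm aa w bb := by
    intro w
    induction w with
    | nil =>
      intro a' b' hp aa haa
      rw [List.map_nil] at hp
      cases hp
      exact ⟨aa, haa, LPath.nil _⟩
    | cons l w ih =>
      intro a' b' hp aa haa
      rw [List.map_cons] at hp
      cases hp with
      | @cons a1 c' b1 l1 w1 h₁ h₂ =>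
        cases l with
        | inl x =>
          simp only [Sum.map_inl] at h₁
          cases h₁
          have hstep : ι (aa * Gm (of x)) = φ (a' * F (of (x : Y))) := by
            rw [map_mul, hcomm, haa, hFx, hφmul a' (f x) (hrange x)]
          obtain ⟨bb, hbb, hpath⟩ := ih _ _ h₂ (aa * Gm (of x)) hstep
          exact ⟨bb, hbb, LPath.cons (LStep.posW aa x) hpath⟩
        | inr x =>
          simp only [Sum.map_inr] at h₁
          cases h₁
          rw [hFx] at haa
          revert haa h₂
          induction c' using WithOne.recOneCoe with
          | one =>
            intro h₂ haa
            rw [one_mul, hφc, (hid _ (hrange x)).2] at haa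
            have haa' : aa = ((g x : ↥H) : WithOne ↥H) := by
              apply hι_inj
              rw [haa, hιc]
              exact (congrArg _ (hg x)).symm
            obtain ⟨bb, hbb, hpath⟩ := ih 1 b' h₂ 1 (by rw [map_one, hφ1])
            refine ⟨bb, hbb, LPath.cons ?_ hpath⟩
            have hstep := LStep.negW (σ := Gm) 1 x
            rw [one_mul, hGx, ← haa'] at hstep
            exact hstep
          | coe s =>
            intro h₂ haa
            rw [← WithOne.coe_mul, hφc, mul_assoc, (hid _ (hrange x)).2] at haa
            obtain ⟨x', hx'H, hxx', -⟩ := hinv (f x) (hrange x)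
            revert haa
            induction aa using WithOne.recOneCoe with
            | one =>
              intro haa
              rw [map_one] at haa
              exact absurd haa.symm WithOne.coe_ne_one
            | coe h =>
              intro haa
              rw [hιc, WithOne.coe_inj] at haa
              have htH : s * e ∈ H := by
                have hse : s * e = (h : S) * x' := by
                  rw [haa, ← hxx', ← mul_assoc]
                rw [hse]
                exact H.mul_mem h.2 hx'H
              set cc : ↥H := ⟨s * e, htH⟩ with hcc
              have hccφ : ι (cc : WithOne ↥H) = φ (s : WithOne S) := by
                rw [hιc, hφc]
              obtain ⟨bb, hbb, hpath⟩ := ih _ b' h₂ (cc : WithOne ↥H) hccφ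
              refine ⟨bb, hbb, LPath.cons ?_ hpath⟩
              have heq : ((h : ↥H) : WithOne ↥H) = (cc : WithOne ↥H) * Gm (of x) := by
                apply hι_inj
                rw [map_mul, hcomm, hιc, hιc, hFx, ← WithOne.coe_mul, WithOne.coe_inj, haa]
                show s * f (x : Y) = s * e * f (x : Y)
                rw [mul_assoc, (hid _ (hrange x)).1]
              rw [heq]
              exact LStep.negW (σ := Gm) (cc : WithOne ↥H) x
  constructor
  · intro hw
    have := lpath_map_hom (Subtype.val : X → Y) ι hcomm hw
    rwa [map_one] at this
  · intro hw
    obtain ⟨bb, hbb, hpath⟩ := key w 1 1 hw 1 (by rw [map_one, hφ1])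
    have hbb1 : bb = 1 := by
      apply hι_inj
      rw [hbb, hφ1, map_one]
    rwa [hbb1] at hpath
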